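/- Milnor's Lobachevsky function Λ(θ) = −∫₀^θ ln|2 sin t| dt is well-defined and continuous on ℝ, is π-periodic, and is odd: Λ(−θ) = −Λ(θ). -/

import Mathlib

/-- Milnor's Lobachevsky function `Λ(θ) = -∫₀^θ log |2 sin t| dt`. -/
noncomputable def lobachevsky (θ : ℝ) : ℝ :=
  -∫ t in (0 : ℝ)..θ, Real.log |2 * Real.sin t|

open Real MeasureTheory Set intervalIntegral

namespace LobachevskyAux

/-- `log` is interval integrable on `[0, b]` for `b > 0`. -/
lemma intInt_log {b : ℝ} (hb : 0 < b) : IntervalIntegrable Real.log volume 0 b := by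
  have hdom : IntervalIntegrable (fun x : ℝ => x + 2 * x ^ (-(1/2 : ℝ))) volume 0 b := by
    exact (continuous_id.intervalIntegrable 0 b).add
      ((intervalIntegral.intervalIntegrable_rpow' (by norm_num)).const_mul 2)
  apply hdom.mono_fun' Real.measurable_log.aestronglyMeasurable
  have hmem : ∀ᵐ x ∂(volume.restrict (Set.uIoc (0:ℝ) b)), x ∈ Set.uIoc (0:ℝ) b :=
    ae_restrict_mem measurableSet_uIoc
  filter_upwards [hmem] with x hx
  rw [Set.uIoc_of_le hb.le] at hx
  obtain ⟨hx0, _⟩ := hx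
  have hrpos : (0:ℝ) < x ^ (-(1/2 : ℝ)) := Real.rpow_pos_of_pos hx0 _
  rcases le_or_gt 1 x with h1 | h1
  · have : Real.log x ≤ x - 1 := Real.log_le_sub_one_of_pos hx0
    have hlogpos : 0 ≤ Real.log x := Real.log_nonneg h1
    simp only [Real.norm_eq_abs, abs_of_nonneg hlogpos]
    nlinarith
  · have hlogneg : Real.log x ≤ 0 := Real.log_nonpos hx0.le h1.le
    have key : Real.log (x ^ (-(1/2 : ℝ))) ≤ x ^ (-(1/2 : ℝ)) - 1 :=
      Real.log_le_sub_one_of_pos hrpos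
    rw [Real.log_rpow hx0] at key
    simp only [Real.norm_eq_abs, abs_of_nonpos hlogneg]
    nlinarith

/-- `log` is interval integrable on `[-(π/2), π/2]`. -/
lemma intInt_log_sym : IntervalIntegrable Real.log volume (-(π/2)) (π/2) := by
  have h1 : IntervalIntegrable Real.log volume 0 (π/2) := intInt_log pi_div_two_pos
  have h2 : IntervalIntegrable (fun x : ℝ => Real.log (-x)) volume (-(0:ℝ)) (-(π/2)) :=
    (IntervalIntegrable.iff_comp_neg (a := 0) (b := π/2) (f := Real.log) (by simp)).mp h1
  have h3 : (fun x : ℝ => Real.log (-x)) = Real.log := funext fun x => Real.log_neg_eq_log x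
  rw [h3] at h2
  simp only [neg_zero] at h2
  exact h2.symm.trans h1

/-- The integrand of the Lobachevsky function. -/
noncomputable def F (t : ℝ) : ℝ := Real.log |2 * Real.sin t|

lemma F_periodic : Function.Periodic F π := by
  intro x
  simp only [F, Real.sin_add_pi, mul_neg, abs_neg]

lemma F_even (t : ℝ) : F (-t) = F t := by
  simp only [F, Real.sin_neg, mul_neg, abs_neg]

/-- Base case: `F` is interval integrable on `[-(π/2), π/2]`. -/
lemma F_int_base : IntervalIntegrable F volume (-(π/2)) (π/2) := by
  have hdom : IntervalIntegrable (fun t : ℝ => |Real.log t| + Real.log 2) volume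
      (-(π/2)) (π/2) := intInt_log_sym.abs.add (intervalIntegrable_const)
  apply hdom.mono_fun' ((Real.measurable_log.comp
    ((measurable_const.mul Real.measurable_sin).abs)).aestronglyMeasurable)
  have hmem : ∀ᵐ x ∂(volume.restrict (Set.uIoc (-(π/2)) (π/2))), x ∈ Set.uIoc (-(π/2)) (π/2) :=
    ae_restrict_mem measurableSet_uIoc
  have hne : ∀ᵐ x : ℝ ∂(volume.restrict (Set.uIoc (-(π/2)) (π/2))), x ≠ 0 := by
    refine ae_restrict_of_ae ?_
    have h0 : (volume : Measure ℝ) {(0:ℝ)} = 0 := Real.volume_singleton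
    rw [ae_iff]
    convert h0 using 2
    ext x
    simp
  filter_upwards [hmem, hne] with t ht htne
  simp only [Function.comp_apply, Pi.mul_apply]
  rw [Set.uIoc_of_le (by linarith [pi_div_two_pos.le] : -(π/2) ≤ π/2)] at ht
  have habs : |t| ≤ π / 2 := by
    rw [abs_le]; exact ⟨ht.1.le, ht.2⟩
  have htpos : (0:ℝ) < |t| := abs_pos.mpr htne
  have hjordan : 2 / π * |t| ≤ |Real.sin t| := Real.mul_abs_le_abs_sin habs
  have hpi : (0:ℝ) < π := Real.pi_pos
  have hsin_lb : |t| * (2 / π) ≤ |Real.sin t| := by linarith [hjordan]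
  have h2sin_lb : |t| ≤ |2 * Real.sin t| := by
    rw [abs_mul, abs_two]
    have : 2 / π ≥ 1 / 2 := by
      rw [ge_iff_le, div_le_div_iff₀ (by norm_num) hpi]
      linarith [Real.pi_le_four]
    nlinarith [abs_nonneg t]
  have h2sin_ub : |2 * Real.sin t| ≤ 2 * |t| := by
    rw [abs_mul, abs_two]
    linarith [Real.abs_sin_le_abs (x := t)]
  have h2sinpos : (0:ℝ) < |2 * Real.sin t| := lt_of_lt_of_le htpos h2sin_lb
  have hub : Real.log |2 * Real.sin t| ≤ Real.log 2 + Real.log |t| := by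
    calc Real.log |2 * Real.sin t| ≤ Real.log (2 * |t|) :=
          Real.log_le_log h2sinpos h2sin_ub
      _ = Real.log 2 + Real.log |t| := Real.log_mul two_ne_zero (ne_of_gt htpos)
  have hlb : Real.log |t| ≤ Real.log |2 * Real.sin t| :=
    Real.log_le_log htpos h2sin_lb
  have hlog2 : (0:ℝ) ≤ Real.log 2 := Real.log_nonneg one_le_two
  have hlt : Real.log |t| = Real.log t := Real.log_abs t
  rw [Real.norm_eq_abs, abs_le]
  constructor
  · have h1 : -|Real.log t| ≤ Real.log t := neg_abs_le _
    linarith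
  · have h1 : Real.log t ≤ |Real.log t| := le_abs_self _
    linarith

/-- `F` is interval integrable on translates `[kπ - π/2, kπ + π/2]`. -/
lemma F_int_translate (k : ℤ) :
    IntervalIntegrable F volume ((k:ℝ) * π - π/2) ((k:ℝ) * π + π/2) := by
  have h := F_int_base.comp_sub_right ((k:ℝ) * π)
  have heq : (fun x => F (x - (k:ℝ) * π)) = F :=
    funext fun x => F_periodic.sub_int_mul_eq k
  rw [heq] at h
  have e1 : -(π/2) + (k:ℝ) * π = (k:ℝ) * π - π/2 := by ring
  have e2 : π/2 + (k:ℝ) * π = (k:ℝ) * π + π/2 := by ring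
  rwa [e1, e2] at h

/-- `F` is interval integrable on `[-(nπ + π/2), nπ + π/2]`. -/
lemma F_int_chain (n : ℕ) :
    IntervalIntegrable F volume (-((n:ℝ) * π + π/2)) ((n:ℝ) * π + π/2) := by
  induction n with
  | zero => simpa using F_int_base
  | succ n ih =>
    have hl := F_int_translate (-(n+1) : ℤ)
    have hr := F_int_translate ((n+1) : ℤ)
    have el1 : ((-(n+1) : ℤ) : ℝ) * π - π/2 = -(((n:ℝ)+1) * π + π/2) := by push_cast; ring
    have el2 : ((-(n+1) : ℤ) : ℝ) * π + π/2 = -((n:ℝ) * π + π/2) := by push_cast; ring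
    have er1 : (((n+1) : ℤ) : ℝ) * π - π/2 = (n:ℝ) * π + π/2 := by push_cast; ring
    have er2 : (((n+1) : ℤ) : ℝ) * π + π/2 = ((n:ℝ)+1) * π + π/2 := by push_cast; ring
    rw [el1, el2] at hl
    rw [er1, er2] at hr
    have := (hl.trans ih).trans hr
    convert this using 2 <;> push_cast <;> ring

/-- `F` is interval integrable on every interval. -/
lemma F_int (a b : ℝ) : IntervalIntegrable F volume a b := by
  obtain ⟨n, hn⟩ := exists_nat_ge (max |a| |b|)
  have hpi : (1:ℝ) ≤ π := by linarith [Real.pi_gt_three]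
  have hnpi : (n:ℝ) ≤ (n:ℝ) * π := le_mul_of_one_le_right (Nat.cast_nonneg n) hpi
  have hbound : ∀ x ∈ Set.uIcc a b, x ∈ Set.uIcc (-((n:ℝ) * π + π/2)) ((n:ℝ) * π + π/2) := by
    intro x hx
    have h1 : |x| ≤ max |a| |b| := by
      rcases Set.mem_uIcc.mp hx with ⟨h1, h2⟩ | ⟨h1, h2⟩ <;> rw [abs_le] <;> constructor
      · exact le_trans (le_trans (neg_le_neg (le_max_left |a| |b|)) (neg_abs_le a)) h1
      · exact h2.trans ((le_abs_self b).trans (le_max_right _ _))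
      · exact le_trans (le_trans (neg_le_neg (le_max_right |a| |b|)) (neg_abs_le b)) h1
      · exact h2.trans ((le_abs_self a).trans (le_max_left _ _))
    have h2 : |x| ≤ (n:ℝ) * π + π/2 := by
      have := h1.trans hn
      linarith [pi_div_two_pos.le, this.trans hnpi]
    rw [Set.uIcc_of_le (by linarith [abs_nonneg x] : -((n:ℝ) * π + π/2) ≤ (n:ℝ) * π + π/2)]
    rw [abs_le] at h2
    exact ⟨h2.1, h2.2⟩
  exact (F_int_chain n).mono_set hbound

lemma abs_le_neg_left {x : ℝ} (h : -x ≤ x) : True := trivial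

/-- The key integral: `∫₀^π log |2 sin t| dt = 0`. -/
lemma integral_F_zero : (∫ t in (0:ℝ)..π, F t) = 0 := by
  -- reflection: ∫_{π/2}^π F = ∫_0^{π/2} F
  have hrefl : (∫ t in (π/2:ℝ)..π, F t) = ∫ t in (0:ℝ)..(π/2), F t := by
    have h := intervalIntegral.integral_comp_sub_left F π (a := 0) (b := π/2)
    have heq : ∀ x : ℝ, F (π - x) = F x := by
      intro x; simp only [F, Real.sin_pi_sub]
    simp only [heq] at h
    rw [show π - π/2 = π/2 by ring, show π - (0:ℝ) = π by ring] at h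
    exact h.symm
  have hJ2I : (∫ t in (0:ℝ)..π, F t) = 2 * ∫ t in (0:ℝ)..(π/2), F t := by
    rw [← intervalIntegral.integral_add_adjacent_intervals
      (F_int 0 (π/2)) (F_int (π/2) π), hrefl]
    ring
  -- substitution t = 2u
  have hsub : (∫ u in (0:ℝ)..(π/2), F (2 * u)) = 2⁻¹ * ∫ t in (0:ℝ)..π, F t := by
    have h := intervalIntegral.integral_comp_mul_left F (a := 0) (b := π/2)
      (c := 2) two_ne_zero
    rw [h, show (2:ℝ) * (π/2) = π by ring, show (2:ℝ) * 0 = 0 by ring,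
      smul_eq_mul]
  -- a.e. identity F(2u) = F u + F (π/2 - u)
  have hcount1 : (volume : Measure ℝ) {x : ℝ | Real.sin x = 0} = 0 := by
    have h : {x : ℝ | Real.sin x = 0} = Set.range (fun n : ℤ => (n:ℝ) * π) := by
      ext x; simp only [Set.mem_setOf_eq, Set.mem_range, Real.sin_eq_zero_iff]
    rw [h]
    exact Set.Countable.measure_zero (Set.countable_range _) _
  have hcount2 : (volume : Measure ℝ) {x : ℝ | Real.cos x = 0} = 0 := by
    have h : {x : ℝ | Real.cos x = 0} ⊆ Set.range (fun n : ℤ => (2*(n:ℝ)+1) * π / 2) := by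
      intro x hx
      rw [Set.mem_setOf_eq, Real.cos_eq_zero_iff] at hx
      obtain ⟨n, hn⟩ := hx
      exact ⟨n, hn.symm⟩
    exact measure_mono_null h (Set.Countable.measure_zero (Set.countable_range _) _)
  have hae : ∀ᵐ u : ℝ ∂volume, Real.sin u ≠ 0 ∧ Real.cos u ≠ 0 := by
    rw [ae_iff]
    refine measure_mono_null (fun x hx => ?_)
      (measure_union_null hcount1 hcount2)
    simp only [Set.mem_setOf_eq, not_and_or, not_ne_iff] at hx
    rcases hx with h | h
    · exact Set.mem_union_left _ h
    · exact Set.mem_union_right _ h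
  have hcongr : (∫ u in (0:ℝ)..(π/2), F (2 * u))
      = ∫ u in (0:ℝ)..(π/2), (F u + F (π/2 - u)) := by
    apply intervalIntegral.integral_congr_ae
    filter_upwards [hae] with u hu _
    obtain ⟨hs, hc⟩ := hu
    have hprod : 2 * Real.sin (2 * u) = (2 * Real.sin u) * (2 * Real.cos u) := by
      rw [Real.sin_two_mul]; ring
    have h1 : F (2 * u) = Real.log |(2 * Real.sin u) * (2 * Real.cos u)| := by
      rw [F, hprod]
    rw [h1, abs_mul, Real.log_mul (abs_ne_zero.mpr (by positivity))
      (abs_ne_zero.mpr (by positivity))]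
    congr 1
    simp only [F, Real.sin_pi_div_two_sub]
  have hFc_int : IntervalIntegrable (fun u => F (π/2 - u)) volume 0 (π/2) := by
    have h := (F_int (π/2) 0).comp_sub_left (π/2)
    simpa using h
  have hcos : (∫ u in (0:ℝ)..(π/2), F (π/2 - u)) = ∫ t in (0:ℝ)..(π/2), F t := by
    have h := intervalIntegral.integral_comp_sub_left F (π/2) (a := 0) (b := π/2)
    rw [h, show π/2 - π/2 = (0:ℝ) by ring, show π/2 - (0:ℝ) = π/2 by ring]
  have hsum : (∫ u in (0:ℝ)..(π/2), (F u + F (π/2 - u)))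
      = (∫ t in (0:ℝ)..(π/2), F t) + ∫ t in (0:ℝ)..(π/2), F t := by
    rw [intervalIntegral.integral_add (F_int 0 (π/2)) hFc_int, hcos]
  have hkey : 2⁻¹ * (∫ t in (0:ℝ)..π, F t)
      = (∫ t in (0:ℝ)..(π/2), F t) + ∫ t in (0:ℝ)..(π/2), F t := by
    rw [← hsub, hcongr, hsum]
  rw [hJ2I] at hkey ⊢
  linarith

end LobachevskyAux

/-- Milnor's Lobachevsky function is well-defined (the integrand is interval
integrable), continuous on ℝ, π-periodic, and odd. -/
theorem stmt16 :
    (∀ θ : ℝ, IntervalIntegrable (fun t => Real.log |2 * Real.sin t|)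
      MeasureTheory.volume 0 θ) ∧
    Continuous lobachevsky ∧
    (∀ θ : ℝ, lobachevsky (θ + Real.pi) = lobachevsky θ) ∧
    (∀ θ : ℝ, lobachevsky (-θ) = -lobachevsky θ) := by
  open LobachevskyAux in
  have hF : (fun t => Real.log |2 * Real.sin t|) = LobachevskyAux.F := rfl
  refine ⟨fun θ => LobachevskyAux.F_int 0 θ, ?_, ?_, ?_⟩
  · have h : Continuous fun θ => ∫ t in (0:ℝ)..θ, LobachevskyAux.F t :=
      intervalIntegral.continuous_primitive (fun a b => LobachevskyAux.F_int a b) 0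
    have : lobachevsky = fun θ => -∫ t in (0:ℝ)..θ, LobachevskyAux.F t := rfl
    rw [this]
    exact h.neg
  · intro θ
    have hsplit := intervalIntegral.integral_add_adjacent_intervals
      (LobachevskyAux.F_int 0 θ) (LobachevskyAux.F_int θ (θ + Real.pi))
    have hper : (∫ t in θ..(θ + Real.pi), LobachevskyAux.F t)
        = ∫ t in (0:ℝ)..(0 + Real.pi), LobachevskyAux.F t :=
      LobachevskyAux.F_periodic.intervalIntegral_add_eq θ 0
    have hzero : (∫ t in (0:ℝ)..(0 + Real.pi), LobachevskyAux.F t) = 0 := by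
      rw [zero_add]; exact LobachevskyAux.integral_F_zero
    show -∫ t in (0:ℝ)..(θ + Real.pi), LobachevskyAux.F t
        = -∫ t in (0:ℝ)..θ, LobachevskyAux.F t
    rw [← hsplit, hper, hzero, add_zero]
  · intro θ
    show -∫ t in (0:ℝ)..(-θ), LobachevskyAux.F t
        = -(-∫ t in (0:ℝ)..θ, LobachevskyAux.F t)
    have h := intervalIntegral.integral_comp_neg LobachevskyAux.F (a := 0) (b := θ)
    simp only [LobachevskyAux.F_even] at h
    rw [neg_zero] at h
    rw [show (∫ t in (0:ℝ)..(-θ), LobachevskyAux.F t)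
        = -∫ t in (-θ:ℝ)..(0:ℝ), LobachevskyAux.F t from
      intervalIntegral.integral_symm (-θ) 0]
    rw [← h]
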